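/- Let G₁ be the group with presentation ⟨a, b, c, d | b⁻¹a²b = a³, c⁻¹a³c = a⁵, d⁻¹a⁵d = a², bc = cb, cd = dc, db = bd⟩. Then G₁ is metabelian, and the assignments a ↦ a³⁰, b ↦ b, c ↦ c, d ↦ d determine an automorphism of G₁. -/

import Mathlib

universe u v
open CategoryTheory

/-! ### Group homology via the left derived functors of coinvariants -/

section HomologyDefs

variable (k G : Type u) [CommRing k] [Group G]

/-- The submodule of a representation generated by the elements `g • a - a`. -/
noncomputable def augSubmodule (A : Rep.{u} k G) : Submodule k A :=
  Submodule.span k {x : A | ∃ (g : G) (a : A), A.ρ g a - a = x}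

theorem augSubmodule_le_comap {A B : Rep.{u} k G} (f : A ⟶ B) :
    augSubmodule k G A ≤ (augSubmodule k G B).comap f.hom.toLinearMap := by
  rw [augSubmodule, Submodule.span_le]
  rintro x ⟨g, a, rfl⟩
  simp only [SetLike.mem_coe, Submodule.mem_comap, map_sub]
  refine Submodule.subset_span ?_
  exact ⟨g, f.hom a, by rw [← Rep.hom_comm_apply]; rfl⟩

/-- The coinvariants functor `Rep k G ⥤ ModuleCat k`, sending `M` to `M_G`. -/
noncomputable def coinvariantsFunctor : Rep.{u} k G ⥤ ModuleCat k where
  obj A := ModuleCat.of k (A ⧸ augSubmodule k G A)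
  map {A B} f := ModuleCat.ofHom
    (Submodule.mapQ _ _ f.hom.toLinearMap (augSubmodule_le_comap k G f))
  map_id A := by
    apply ModuleCat.hom_ext
    apply Submodule.linearMap_qext
    rfl
  map_comp f g := by
    apply ModuleCat.hom_ext
    apply Submodule.linearMap_qext
    rfl

noncomputable instance : (coinvariantsFunctor k G).Additive where
  map_add := by
    intro X Y f g
    apply ModuleCat.hom_ext
    apply Submodule.linearMap_qext
    rfl

/-- The `n`-th group homology `H_n(G, A)`, defined as the value at `A` of the `n`-th left
derived functor of the coinvariants functor. -/
noncomputable def groupHomology' (A : Rep.{u} k G) (n : ℕ) : ModuleCat k :=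
  (Functor.leftDerived (coinvariantsFunctor k G) n).obj A

/-- The homological dimension `hd_k(G)`: the least `m` such that `H_{m+1}(G, M) = 0` for all
`kG`-modules `M` (`∞` if there is no such `m`). -/
noncomputable def hdim : ℕ∞ :=
  sInf {e : ℕ∞ | ∃ m : ℕ, e = m ∧ ∀ A : Rep.{u} k G, Subsingleton (groupHomology' k G A (m + 1))}

/-- The cohomological dimension `cd_k(G)`: the least `m` such that `H^{m+1}(G, M) = 0` for all
`kG`-modules `M` (`∞` if there is no such `m`). -/
noncomputable def cdim : ℕ∞ :=
  sInf {e : ℕ∞ | ∃ m : ℕ, e = m ∧ ∀ A : Rep.{u} k G, Subsingleton (groupCohomology A (m + 1))}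

end HomologyDefs

/-- The `k`-finite-dimensional homological dimension
`fdhd_k(G) = sup {n | H_n(G,M) ≠ 0 for some kG-module M with dim_k M < ∞}`. -/
noncomputable def fdhdim (k G : Type u) [Field k] [Group G] : ℕ∞ :=
  sSup {e : ℕ∞ | ∃ (n : ℕ) (A : Rep.{u} k G), e = n ∧ FiniteDimensional k A ∧
    Nontrivial (groupHomology' k G A n)}

/-! ### Series and classes of groups -/

/-- `Q` is (isomorphic to) the quotient `K/H` of the pair of subgroups `H ≤ K`. -/
def IsQuotientOfPair {G : Type u} [Group G] (H K : Subgroup G) (Q : Type u) [Group Q] : Prop :=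
  H ≤ K ∧ ∃ φ : ↥K →* Q, Function.Surjective φ ∧ φ.ker = H.subgroupOf K

/-- A group is locally finite if every finitely generated subgroup is finite. -/
def IsLocallyFiniteGroup (Q : Type*) [Group Q] : Prop :=
  ∀ S : Subgroup Q, S.FG → Finite S

/-- A group is infinite cyclic if it is isomorphic to `ℤ`. -/
def IsInfiniteCyclic (Q : Type*) [Group Q] : Prop :=
  Nonempty (Q ≃* Multiplicative ℤ)

/-- A group is quasicyclic (Prüfer) of type `p` if it is an infinite, locally cyclic `p`-group. -/
def IsQuasicyclic (p : ℕ) (Q : Type*) [Group Q] : Prop :=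
  p.Prime ∧ Infinite Q ∧ (∀ S : Subgroup Q, S.FG → IsCyclic S) ∧
    ∀ x : Q, ∃ n : ℕ, x ^ (p ^ n) = 1

/-- `G` has a finite subnormal series all of whose factors satisfy `P`. -/
def HasSeriesWith (G : Type u) [Group G] (P : (Q : Type u) → [inst : Group Q] → Prop) : Prop :=
  ∃ (r : ℕ) (f : Fin (r + 1) → Subgroup G), f 0 = ⊥ ∧ f (Fin.last r) = ⊤ ∧
    ∀ i : Fin r, ∃ (Q : Type u) (_ : Group Q),
      IsQuotientOfPair (f i.castSucc) (f i.succ) Q ∧ P Q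

/-- `G` has a finite subnormal series with factors locally finite or infinite cyclic, with
exactly `n` infinite cyclic factors. -/
def HasHirschSeries (G : Type u) [Group G] (n : ℕ) : Prop :=
  ∃ (r : ℕ) (f : Fin (r + 1) → Subgroup G) (c : Fin r → Bool),
    f 0 = ⊥ ∧ f (Fin.last r) = ⊤ ∧
    (∀ i : Fin r, ∃ (Q : Type u) (_ : Group Q),
      IsQuotientOfPair (f i.castSucc) (f i.succ) Q ∧
        (if c i then IsInfiniteCyclic Q else IsLocallyFiniteGroup Q)) ∧
    (Finset.univ.filter fun i => c i = true).card = n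

/-- The Hirsch length of a group, `∞` if the group has no series as above. -/
noncomputable def hirschLength (G : Type u) [Group G] : ℕ∞ :=
  sInf {e : ℕ∞ | ∃ n : ℕ, e = n ∧ HasHirschSeries G n}

/-- A group is polycyclic if it has a finite subnormal series with cyclic factors. -/
def IsPolycyclic (G : Type u) [Group G] : Prop :=
  HasSeriesWith G fun Q _ => IsCyclic Q

/-- A group is polycyclic-by-finite if it has a normal polycyclic subgroup of finite index. -/
def IsPolycyclicByFinite (G : Type u) [Group G] : Prop :=
  ∃ P : Subgroup G, P.Normal ∧ IsPolycyclic ↥P ∧ P.FiniteIndex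

/-- A group is an (elementary amenable) minimax group if it has a finite subnormal series
whose factors are cyclic, quasicyclic or finite. -/
def IsMinimax (G : Type u) [Group G] : Prop :=
  HasSeriesWith G fun Q _ => IsCyclic Q ∨ (∃ p : ℕ, IsQuasicyclic p Q) ∨ Finite Q

/-- `G` has no `k`-torsion: the order of every finite subgroup of `G` is invertible in `k`. -/
def HasNoTorsionOver (k : Type u) [CommRing k] (G : Type v) [Group G] : Prop :=
  ∀ H : Subgroup G, Finite H → IsUnit ((Nat.card H : k))

/-- The class of elementary amenable groups: the smallest class of groups containing all finite
groups and all abelian groups, closed under isomorphism, extensions and directed unions. -/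
inductive IsElementaryAmenable : (G : Type u) → [inst : Group G] → Prop
  | of_finite (G : Type u) [Group G] : Finite G → IsElementaryAmenable G
  | of_abelian (G : Type u) [Group G] : (∀ a b : G, a * b = b * a) → IsElementaryAmenable G
  | of_mulEquiv {G H : Type u} [Group G] [Group H] :
      IsElementaryAmenable G → (G ≃* H) → IsElementaryAmenable H
  | extension (G : Type u) [Group G] (N : Subgroup G) (hN : N.Normal) :
      IsElementaryAmenable ↥N →
      (@IsElementaryAmenable (G ⧸ N) (@QuotientGroup.Quotient.group G _ N hN)) →
      IsElementaryAmenable G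
  | directed_union (G : Type u) [Group G] (ι : Type u) (s : ι → Subgroup G) :
      Directed (· ≤ ·) s → iSup s = ⊤ → (∀ i, IsElementaryAmenable ↥(s i)) →
      IsElementaryAmenable G

/-- The class of constructible groups: groups built up from the trivial group by finitely many
ascending HNN-extensions and finite extensions. -/
inductive IsConstructible : (G : Type u) → [inst : Group G] → Prop
  | of_subsingleton (G : Type u) [Group G] : Subsingleton G → IsConstructible G
  | of_mulEquiv {G H : Type u} [Group G] [Group H] :
      IsConstructible G → (G ≃* H) → IsConstructible H
  | ascending_hnn (B : Type u) [Group B] (A : Subgroup B) (φ : (⊤ : Subgroup B) ≃* A) :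
      IsConstructible B → IsConstructible (HNNExtension B ⊤ A φ)
  | finite_extension (G : Type u) [Group G] (N : Subgroup G) (hN : N.Normal) :
      IsConstructible ↥N → Finite (G ⧸ N) → IsConstructible G

/-- A group is metabelian if its derived subgroup is abelian. -/
def IsMetabelian (G : Type*) [Group G] : Prop :=
  ∀ x y : ↥(commutator G), x * y = y * x

/-- `G` is the colimit of a filtered system of groups all of which satisfy `P`. -/
def IsFilteredColimitOfGroupsWith (G : Type u) [Group G]
    (P : (H : Type u) → [inst : Group H] → Prop) : Prop :=
  ∃ (J : Type u) (_ : SmallCategory J) (_ : IsFiltered J) (F : J ⥤ GrpCat.{u})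
    (c : Limits.Cocone F), Nonempty (Limits.IsColimit c) ∧ (∀ j, P ↥(F.obj j)) ∧
      Nonempty (↥(c.pt) ≃* G)

/-- `G`, equipped with the maps `ι n : B → G`, is the colimit of the sequence
`B →φ B →φ B →φ ⋯`. -/
def IsColimitOfSequence {B : Type u} [Group B] (φ : B →* B) (G : Type u) [Group G]
    (ι : ℕ → (B →* G)) : Prop :=
  (∀ n, (ι (n + 1)).comp φ = ι n) ∧
    ∀ (H : Type u) (_ : Group H) (ψ : ℕ → (B →* H)), (∀ n, (ψ (n + 1)).comp φ = ψ n) →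
      ∃! χ : G →* H, ∀ n, χ.comp (ι n) = ψ n

/-- The trivial module `k` over the group algebra `kG`. -/
def TrivialModule (k G : Type u) [CommRing k] [Group G] : Type u := k

noncomputable instance (k G : Type u) [CommRing k] [Group G] :
    AddCommGroup (TrivialModule k G) := inferInstanceAs (AddCommGroup k)

noncomputable instance (k G : Type u) [CommRing k] [Group G] :
    Module (MonoidAlgebra k G) (TrivialModule k G) :=
  Module.compHom k ((MonoidAlgebra.lift k k G 1).toRingHom)

/-- `G` is of type `FP` over `k`: the trivial `kG`-module `k` has a projective resolution of
finite length by finitely generated projective `kG`-modules. -/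
def IsTypeFP (k G : Type u) [CommRing k] [Group G] : Prop :=
  ∃ (P : ProjectiveResolution (ModuleCat.of (MonoidAlgebra k G) (TrivialModule k G))) (n : ℕ),
    (∀ i, n < i → Limits.IsZero (P.complex.X i)) ∧
    ∀ i, Module.Finite (MonoidAlgebra k G) (P.complex.X i)

/-- A group is residually finite if every nontrivial element survives in some finite quotient. -/
def IsResiduallyFiniteGroup (G : Type*) [Group G] : Prop :=
  ∀ g : G, g ≠ 1 → ∃ H : Subgroup G, H.Normal ∧ H.FiniteIndex ∧ g ∉ H

/-- A group is nilpotent-by-polycyclic-by-finite if it has a normal nilpotent subgroup `N`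
such that `G/N` is polycyclic-by-finite. -/
def IsNilpotentByPolycyclicByFinite (G : Type u) [Group G] : Prop :=
  ∃ (N : Subgroup G) (hN : N.Normal), Group.IsNilpotent ↥N ∧
    @IsPolycyclicByFinite (G ⧸ N) (@QuotientGroup.Quotient.group G _ N hN)

/-- Data of a subnormal series of `G` witnessing that `G` is a soluble minimax group (all factors
are cyclic or quasicyclic), with exactly `h` infinite cyclic factors and exactly `mp` factors
isomorphic to the Prüfer group `C_{p^∞}`. -/
def HasSolubleMinimaxData (G : Type u) [Group G] (p : ℕ) (h mp : ℕ) : Prop :=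
  ∃ (r : ℕ) (f : Fin (r + 1) → Subgroup G) (c : Fin r → Fin 4),
    f 0 = ⊥ ∧ f (Fin.last r) = ⊤ ∧
    (∀ i : Fin r, ∃ (Q : Type u) (_ : Group Q),
      IsQuotientOfPair (f i.castSucc) (f i.succ) Q ∧
      (c i = 0 → IsCyclic Q ∧ Finite Q) ∧
      (c i = 1 → IsInfiniteCyclic Q) ∧
      (c i = 2 → IsQuasicyclic p Q) ∧
      (c i = 3 → ∃ q : ℕ, q ≠ p ∧ IsQuasicyclic q Q)) ∧
    (Finset.univ.filter fun i => c i = 1).card = h ∧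
    (Finset.univ.filter fun i => c i = 2).card = mp

/-- The relators of the group
`G₁ = ⟨a,b,c,d | b⁻¹a²b = a³, c⁻¹a³c = a⁵, d⁻¹a⁵d = a², bc = cb, cd = dc, db = bd⟩`,
with `a, b, c, d` the generators indexed by `0, 1, 2, 3`. -/
def G1Rels : Set (FreeGroup (Fin 4)) :=
  { (FreeGroup.of 1)⁻¹ * (FreeGroup.of 0) ^ 2 * FreeGroup.of 1 * ((FreeGroup.of 0) ^ 3)⁻¹,
    (FreeGroup.of 2)⁻¹ * (FreeGroup.of 0) ^ 3 * FreeGroup.of 2 * ((FreeGroup.of 0) ^ 5)⁻¹,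
    (FreeGroup.of 3)⁻¹ * (FreeGroup.of 0) ^ 5 * FreeGroup.of 3 * ((FreeGroup.of 0) ^ 2)⁻¹,
    FreeGroup.of 1 * FreeGroup.of 2 * (FreeGroup.of 2 * FreeGroup.of 1)⁻¹,
    FreeGroup.of 2 * FreeGroup.of 3 * (FreeGroup.of 3 * FreeGroup.of 2)⁻¹,
    FreeGroup.of 3 * FreeGroup.of 1 * (FreeGroup.of 1 * FreeGroup.of 3)⁻¹ }


namespace G1P

abbrev P := PresentedGroup G1Rels

def ga : P := PresentedGroup.of 0
def gb : P := PresentedGroup.of 1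
def gc : P := PresentedGroup.of 2
def gd : P := PresentedGroup.of 3

lemma rel_of_mem {r : FreeGroup (Fin 4)} (hr : r ∈ G1Rels) :
    PresentedGroup.mk G1Rels r = 1 :=
  (QuotientGroup.eq_one_iff r).mpr (Subgroup.subset_normalClosure hr)

lemma mk_of (i : Fin 4) : PresentedGroup.mk G1Rels (FreeGroup.of i) = PresentedGroup.of i := rfl

lemma rel1 : gb⁻¹ * ga ^ 2 * gb = ga ^ 3 := by
  have h := rel_of_mem (show ((FreeGroup.of 1)⁻¹ * (FreeGroup.of 0) ^ 2 * FreeGroup.of 1 *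
      ((FreeGroup.of 0) ^ 3)⁻¹ : FreeGroup (Fin 4)) ∈ G1Rels by
    simp [G1Rels])
  rw [map_mul, map_mul, map_mul, map_inv, map_inv, map_pow, map_pow, mk_of, mk_of] at h
  rw [← mul_inv_eq_one]
  exact h

lemma rel2 : gc⁻¹ * ga ^ 3 * gc = ga ^ 5 := by
  have h := rel_of_mem (show ((FreeGroup.of 2)⁻¹ * (FreeGroup.of 0) ^ 3 * FreeGroup.of 2 *
      ((FreeGroup.of 0) ^ 5)⁻¹ : FreeGroup (Fin 4)) ∈ G1Rels by
    simp [G1Rels])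
  rw [map_mul, map_mul, map_mul, map_inv, map_inv, map_pow, map_pow, mk_of, mk_of] at h
  rw [← mul_inv_eq_one]
  exact h

lemma rel3 : gd⁻¹ * ga ^ 5 * gd = ga ^ 2 := by
  have h := rel_of_mem (show ((FreeGroup.of 3)⁻¹ * (FreeGroup.of 0) ^ 5 * FreeGroup.of 3 *
      ((FreeGroup.of 0) ^ 2)⁻¹ : FreeGroup (Fin 4)) ∈ G1Rels by
    simp [G1Rels])
  rw [map_mul, map_mul, map_mul, map_inv, map_inv, map_pow, map_pow, mk_of, mk_of] at h
  rw [← mul_inv_eq_one]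
  exact h

lemma rel4 : gb * gc = gc * gb := by
  have h := rel_of_mem (show (FreeGroup.of 1 * FreeGroup.of 2 *
      (FreeGroup.of 2 * FreeGroup.of 1)⁻¹ : FreeGroup (Fin 4)) ∈ G1Rels by simp [G1Rels])
  rw [map_mul, map_inv, map_mul, map_mul, mk_of, mk_of] at h
  rw [← mul_inv_eq_one]
  exact h

lemma rel5 : gc * gd = gd * gc := by
  have h := rel_of_mem (show (FreeGroup.of 2 * FreeGroup.of 3 *
      (FreeGroup.of 3 * FreeGroup.of 2)⁻¹ : FreeGroup (Fin 4)) ∈ G1Rels by simp [G1Rels])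
  rw [map_mul, map_inv, map_mul, map_mul, mk_of, mk_of] at h
  rw [← mul_inv_eq_one]
  exact h

lemma rel6 : gd * gb = gb * gd := by
  have h := rel_of_mem (show (FreeGroup.of 3 * FreeGroup.of 1 *
      (FreeGroup.of 1 * FreeGroup.of 3)⁻¹ : FreeGroup (Fin 4)) ∈ G1Rels by simp [G1Rels])
  rw [map_mul, map_inv, map_mul, map_mul, mk_of, mk_of] at h
  rw [← mul_inv_eq_one]
  exact h

end G1P

namespace G1P

lemma hbc : Commute gb gc := rel4
lemma hcd : Commute gc gd := rel5
lemma hdb : Commute gd gb := rel6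

/-- conjugating word -/
def w (i j : ℤ) : P := gb ^ i * gc ^ j

/-- the conjugates of `a` indexed by `ℤ²` -/
def X (i j : ℤ) : P := (w i j)⁻¹ * ga * (w i j)

lemma X_pow (i j : ℤ) (n : ℕ) : (X i j) ^ n = (w i j)⁻¹ * ga ^ n * (w i j) := by
  induction n with
  | zero => simp [X]
  | succ n ih => rw [pow_succ, ih, X, pow_succ]; group

lemma X00 : X 0 0 = ga := by simp [X, w]

lemma w_succ_left (i j : ℤ) : w (i + 1) j = gb * w i j := by
  rw [w, w, add_comm, zpow_add, zpow_one]; group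

lemma w_succ_right (i j : ℤ) : w i (j + 1) = gc * w i j := by
  rw [w, w, add_comm, zpow_add, zpow_one]
  have h : gc * gb ^ i = gb ^ i * gc := (hbc.symm.zpow_right i).eq
  rw [← mul_assoc, ← h]; group

lemma Lb (i j : ℤ) : (X (i + 1) j) ^ 2 = (X i j) ^ 3 := by
  rw [X_pow, X_pow, w_succ_left, mul_inv_rev]
  have : gb⁻¹ * ga ^ 2 * gb = ga ^ 3 := rel1
  calc (w i j)⁻¹ * gb⁻¹ * ga ^ 2 * (gb * w i j)
      = (w i j)⁻¹ * (gb⁻¹ * ga ^ 2 * gb) * w i j := by group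
    _ = (w i j)⁻¹ * ga ^ 3 * w i j := by rw [this]

lemma Lc (i j : ℤ) : (X i (j + 1)) ^ 3 = (X i j) ^ 5 := by
  rw [X_pow, X_pow, w_succ_right, mul_inv_rev]
  calc (w i j)⁻¹ * gc⁻¹ * ga ^ 3 * (gc * w i j)
      = (w i j)⁻¹ * (gc⁻¹ * ga ^ 3 * gc) * w i j := by group
    _ = (w i j)⁻¹ * ga ^ 5 * w i j := by rw [rel2]

lemma Ld (i j : ℤ) : (X i j) ^ 5 = (X (i + 1) (j + 1)) ^ 2 := by
  rw [X_pow, X_pow, w_succ_left, w_succ_right, mul_inv_rev, mul_inv_rev]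
  have h1 : gb⁻¹ * ga ^ 2 * gb = ga ^ 3 := rel1
  calc (w i j)⁻¹ * ga ^ 5 * w i j
      = (w i j)⁻¹ * (gc⁻¹ * (gb⁻¹ * ga ^ 2 * gb) * gc) * w i j := by rw [h1, rel2]
    _ = (w i j)⁻¹ * gc⁻¹ * gb⁻¹ * ga ^ 2 * (gb * (gc * w i j)) := by group

end G1P

namespace G1P

lemma comm_b_w (i j : ℤ) : Commute gb (w i j) :=
  Commute.mul_right ((Commute.refl gb).zpow_right i) (hbc.zpow_right j)

lemma comm_c_w (i j : ℤ) : Commute gc (w i j) :=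
  Commute.mul_right (hbc.symm.zpow_right i) ((Commute.refl gc).zpow_right j)

lemma cb (i j : ℤ) : gb⁻¹ * X i j * gb = X (i + 1) j := by
  rw [X, X, w_succ_left, (comm_b_w i j).eq, mul_inv_rev]
  group

lemma cc (i j : ℤ) : gc⁻¹ * X i j * gc = X i (j + 1) := by
  rw [X, X, w_succ_right, (comm_c_w i j).eq, mul_inv_rev]
  group

lemma cb' (i j : ℤ) : gb * X i j * gb⁻¹ = X (i - 1) j := by
  have h := cb (i - 1) j
  rw [sub_add_cancel] at h
  rw [← h]; group

lemma cc' (i j : ℤ) : gc * X i j * gc⁻¹ = X i (j - 1) := by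
  have h := cc i (j - 1)
  rw [sub_add_cancel] at h
  rw [← h]; group

/-- the central element `bcd` -/
def t : P := gb * gc * gd

lemma t_eq : t = gc * gd * gb := by
  rw [t, hbc.eq, mul_assoc, hdb.symm.eq, ← mul_assoc]

lemma t_comm_ga : Commute t ga := by
  have h2 : t⁻¹ * ga ^ 2 * t = ga ^ 2 := by
    rw [t]
    calc (gb * gc * gd)⁻¹ * ga ^ 2 * (gb * gc * gd)
        = gd⁻¹ * (gc⁻¹ * (gb⁻¹ * ga ^ 2 * gb) * gc) * gd := by group
      _ = ga ^ 2 := by rw [rel1, rel2]; exact rel3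
  have h3 : t⁻¹ * ga ^ 3 * t = ga ^ 3 := by
    rw [t_eq]
    calc (gc * gd * gb)⁻¹ * ga ^ 3 * (gc * gd * gb)
        = gb⁻¹ * (gd⁻¹ * (gc⁻¹ * ga ^ 3 * gc) * gd) * gb := by group
      _ = ga ^ 3 := by rw [rel2, rel3]; exact rel1
  have h1 : t⁻¹ * ga * t = ga := by
    have : t⁻¹ * ga * t = (t⁻¹ * ga ^ 3 * t) * (t⁻¹ * ga ^ 2 * t)⁻¹ := by group
    rw [this, h2, h3]
    group
  have h4 : ga * t = t * (t⁻¹ * ga * t) := by group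
  rw [h1] at h4
  exact h4.symm

end G1P

namespace G1P

lemma t_comm_b : Commute t gb :=
  Commute.mul_left (Commute.mul_left (Commute.refl gb) hbc.symm) hdb

lemma t_comm_c : Commute t gc :=
  Commute.mul_left (Commute.mul_left hbc (Commute.refl gc)) hcd.symm

lemma t_comm_d : Commute t gd :=
  Commute.mul_left (Commute.mul_left hdb.symm hcd) (Commute.refl gd)

lemma t_comm_w (i j : ℤ) : Commute t (w i j) :=
  Commute.mul_right (t_comm_b.zpow_right i) (t_comm_c.zpow_right j)

lemma t_comm_X (i j : ℤ) : Commute t (X i j) :=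
  Commute.mul_right (Commute.mul_right (t_comm_w i j).inv_right t_comm_ga) (t_comm_w i j)

lemma gd_eq : gd = gc⁻¹ * gb⁻¹ * t := by rw [t]; group

lemma cd (i j : ℤ) : gd⁻¹ * X i j * gd = X (i - 1) (j - 1) := by
  rw [gd_eq]
  have h1 : (gc⁻¹ * gb⁻¹ * t)⁻¹ * X i j * (gc⁻¹ * gb⁻¹ * t)
      = t⁻¹ * (gb * (gc * X i j * gc⁻¹) * gb⁻¹) * t := by group
  rw [h1, cc', cb']
  rw [(t_comm_X (i-1) (j-1)).inv_left.eq]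
  group

lemma cd' (i j : ℤ) : gd * X i j * gd⁻¹ = X (i + 1) (j + 1) := by
  have h := cd (i + 1) (j + 1)
  rw [add_sub_cancel_right, add_sub_cancel_right] at h
  rw [← h]; group

end G1P

section CommHelpers
variable {G : Type*} [Group G]

lemma comm32 {x u v z : G} (h2 : x ^ 2 = u) (h3 : x ^ 3 = v)
    (hu : Commute z u) (hv : Commute z v) : Commute z x := by
  have e : x = v * u⁻¹ := by rw [← h2, ← h3]; group
  rw [e]; exact hv.mul_right hu.inv_right

lemma comm25 {x u v z : G} (h2 : x ^ 2 = u) (h5 : x ^ 5 = v)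
    (hu : Commute z u) (hv : Commute z v) : Commute z x := by
  have e : x = v * u⁻¹ * u⁻¹ := by rw [← h2, ← h5]; group
  rw [e]; exact (hv.mul_right hu.inv_right).mul_right hu.inv_right

lemma comm35 {x u v z : G} (h3 : x ^ 3 = u) (h5 : x ^ 5 = v)
    (hu : Commute z u) (hv : Commute z v) : Commute z x := by
  have e : x = u * u * v⁻¹ := by rw [← h3, ← h5]; group
  rw [e]; exact (hu.mul_right hu).mul_right hv.inv_right

end CommHelpers

namespace G1P

lemma C11 (i j : ℤ) : Commute (X i j) (X (i + 1) (j + 1)) := by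
  set a := X i j
  set q := X (i + 1) (j + 1)
  set b := X (i + 1) j
  have h1 : q ^ 2 = a ^ 5 := (Ld i j).symm
  have h2 : q ^ 3 = b ^ 5 := Lc (i + 1) j
  have h3 : a ^ 3 = b ^ 2 := (Lb i j).symm
  have e : a = b ^ 4 * (a ^ 5)⁻¹ := by
    rw [show (b : P) ^ 4 = (b ^ 2) ^ 2 by group, ← h3]; group
  have cb5a5 : Commute (b ^ 5) (a ^ 5) := by
    rw [← h2, ← h1]; exact Commute.pow_pow (Commute.refl q) 3 2
  have cb5a : Commute (b ^ 5) a := by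
    rw [e]
    exact (Commute.pow_pow (Commute.refl b) 5 4).mul_right cb5a5.inv_right
  exact comm32 h1 h2 ((Commute.refl a).pow_right 5) cb5a.symm

lemma C10 (i j : ℤ) : Commute (X i j) (X (i + 1) j) := by
  set a := X i j
  set q := X (i + 1) (j + 1)
  set b := X (i + 1) j
  have hb2 : b ^ 2 = a ^ 3 := Lb i j
  have hb5 : b ^ 5 = q ^ 3 := (Lc (i + 1) j).symm
  exact comm25 hb2 hb5 ((Commute.refl a).pow_right 3) ((C11 i j).pow_right 3)

lemma C01 (i j : ℤ) : Commute (X i j) (X i (j + 1)) := by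
  set a := X i j
  set p := X i (j + 1)
  have hp3 : p ^ 3 = a ^ 5 := Lc i j
  have hp2 : p ^ 2 = (X (i - 1) j) ^ 5 := by
    have h := Ld (i - 1) j
    rw [sub_add_cancel] at h
    exact h.symm
  have hu : Commute a ((X (i - 1) j) ^ 5) := by
    have h := C10 (i - 1) j
    rw [sub_add_cancel] at h
    exact h.symm.pow_right 5
  exact comm32 hp2 hp3 hu ((Commute.refl a).pow_right 5)

lemma C1m1 (i j : ℤ) : Commute (X i j) (X (i + 1) (j - 1)) := by
  set a := X i j
  set y := X (i + 1) (j - 1)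
  have hy2 : y ^ 2 = (X i (j - 1)) ^ 3 := Lb i (j - 1)
  have hy5 : y ^ 5 = (X (i + 1) j) ^ 3 := by
    have h := Lc (i + 1) (j - 1)
    rw [sub_add_cancel] at h
    exact h.symm
  have hu : Commute a ((X i (j - 1)) ^ 3) := by
    have h := C01 i (j - 1)
    rw [sub_add_cancel] at h
    exact h.symm.pow_right 3
  exact comm25 hy2 hy5 hu ((C10 i j).pow_right 3)

lemma C20 (i j : ℤ) : Commute (X i j) (X (i + 2) j) := by
  set a := X i j
  set z := X (i + 2) j
  have hzb : Commute z (X (i + 1) j) := by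
    have h := C10 (i + 1) j
    rw [show i + 1 + 1 = i + 2 by ring] at h
    exact h.symm
  have hzq : Commute z (X (i + 1) (j + 1)) := by
    have h := C1m1 (i + 1) (j + 1)
    rw [show i + 1 + 1 = i + 2 by ring, add_sub_cancel_right] at h
    exact h.symm
  have h3 : a ^ 3 = (X (i + 1) j) ^ 2 := (Lb i j).symm
  have h5 : a ^ 5 = (X (i + 1) (j + 1)) ^ 2 := Ld i j
  exact (comm35 h3 h5 (hzb.pow_right 2) (hzq.pow_right 2)).symm

lemma C21 (i j : ℤ) : Commute (X i j) (X (i + 2) (j + 1)) := by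
  set a := X i j
  set z := X (i + 2) (j + 1)
  have hzb : Commute z (X (i + 1) j) := by
    have h := C11 (i + 1) j
    rw [show i + 1 + 1 = i + 2 by ring] at h
    exact h.symm
  have hzq : Commute z (X (i + 1) (j + 1)) := by
    have h := C10 (i + 1) (j + 1)
    rw [show i + 1 + 1 = i + 2 by ring] at h
    exact h.symm
  have h3 : a ^ 3 = (X (i + 1) j) ^ 2 := (Lb i j).symm
  have h5 : a ^ 5 = (X (i + 1) (j + 1)) ^ 2 := Ld i j
  exact (comm35 h3 h5 (hzb.pow_right 2) (hzq.pow_right 2)).symm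

lemma C2m1 (i j : ℤ) : Commute (X i j) (X (i + 2) (j - 1)) := by
  set a := X i j
  set y := X (i + 2) (j - 1)
  have hy2 : y ^ 2 = (X (i + 1) (j - 1)) ^ 3 := by
    have h := Lb (i + 1) (j - 1)
    rw [show i + 1 + 1 = i + 2 by ring] at h
    exact h
  have hy5 : y ^ 5 = (X (i + 2) j) ^ 3 := by
    have h := Lc (i + 2) (j - 1)
    rw [sub_add_cancel] at h
    exact h.symm
  exact comm25 hy2 hy5 ((C1m1 i j).pow_right 3) ((C20 i j).pow_right 3)

lemma C22 (i j : ℤ) : Commute (X i j) (X (i + 2) (j + 2)) := by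
  set a := X i j
  set v := X (i + 2) (j + 2)
  have hv2 : v ^ 2 = (X (i + 1) (j + 1)) ^ 5 := by
    have h := Ld (i + 1) (j + 1)
    rw [show i + 1 + 1 = i + 2 by ring, show j + 1 + 1 = j + 2 by ring] at h
    exact h.symm
  have hv3 : v ^ 3 = (X (i + 2) (j + 1)) ^ 5 := by
    have h := Lc (i + 2) (j + 1)
    rw [show j + 1 + 1 = j + 2 by ring] at h
    exact h
  exact comm32 hv2 hv3 ((C11 i j).pow_right 5) ((C21 i j).pow_right 5)

lemma C12 (i j : ℤ) : Commute (X i j) (X (i + 1) (j + 2)) := by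
  set a := X i j
  set x := X (i + 1) (j + 2)
  have hx3 : x ^ 3 = (X (i + 1) (j + 1)) ^ 5 := by
    have h := Lc (i + 1) (j + 1)
    rw [show j + 1 + 1 = j + 2 by ring] at h
    exact h
  have hx2 : x ^ 2 = (X i (j + 1)) ^ 5 := by
    have h := Ld i (j + 1)
    rw [show j + 1 + 1 = j + 2 by ring] at h
    exact h.symm
  exact comm32 hx2 hx3 ((C01 i j).pow_right 5) ((C11 i j).pow_right 5)

lemma C02 (i j : ℤ) : Commute (X i j) (X i (j + 2)) := by
  set a := X i j
  set x := X i (j + 2)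
  have hx3 : x ^ 3 = (X i (j + 1)) ^ 5 := by
    have h := Lc i (j + 1)
    rw [show j + 1 + 1 = j + 2 by ring] at h
    exact h
  have hx2 : x ^ 2 = (X (i - 1) (j + 1)) ^ 5 := by
    have h := Ld (i - 1) (j + 1)
    rw [sub_add_cancel, show j + 1 + 1 = j + 2 by ring] at h
    exact h.symm
  have hu : Commute a ((X (i - 1) (j + 1)) ^ 5) := by
    have h := C1m1 (i - 1) (j + 1)
    rw [sub_add_cancel, add_sub_cancel_right] at h
    exact h.symm.pow_right 5
  exact comm32 hx2 hx3 hu ((C01 i j).pow_right 5)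

lemma C30 (i j : ℤ) : Commute (X i j) (X (i + 3) j) := by
  set z := X (i + 3) j
  have hzb : Commute z (X (i + 1) j) := by
    have h := C20 (i + 1) j
    rw [show i + 1 + 2 = i + 3 by ring] at h
    exact h.symm
  have hzq : Commute z (X (i + 1) (j + 1)) := by
    have h := C2m1 (i + 1) (j + 1)
    rw [show i + 1 + 2 = i + 3 by ring, add_sub_cancel_right] at h
    exact h.symm
  exact (comm35 (Lb i j).symm (Ld i j) (hzb.pow_right 2) (hzq.pow_right 2)).symm

lemma C31 (i j : ℤ) : Commute (X i j) (X (i + 3) (j + 1)) := by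
  set z := X (i + 3) (j + 1)
  have hzb : Commute z (X (i + 1) j) := by
    have h := C21 (i + 1) j
    rw [show i + 1 + 2 = i + 3 by ring] at h
    exact h.symm
  have hzq : Commute z (X (i + 1) (j + 1)) := by
    have h := C20 (i + 1) (j + 1)
    rw [show i + 1 + 2 = i + 3 by ring] at h
    exact h.symm
  exact (comm35 (Lb i j).symm (Ld i j) (hzb.pow_right 2) (hzq.pow_right 2)).symm

lemma C32 (i j : ℤ) : Commute (X i j) (X (i + 3) (j + 2)) := by
  set z := X (i + 3) (j + 2)
  have hzb : Commute z (X (i + 1) j) := by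
    have h := C22 (i + 1) j
    rw [show i + 1 + 2 = i + 3 by ring, show j + 2 = j + 2 by ring] at h
    exact h.symm
  have hzq : Commute z (X (i + 1) (j + 1)) := by
    have h := C21 (i + 1) (j + 1)
    rw [show i + 1 + 2 = i + 3 by ring, show j + 1 + 1 = j + 2 by ring] at h
    exact h.symm
  exact (comm35 (Lb i j).symm (Ld i j) (hzb.pow_right 2) (hzq.pow_right 2)).symm

end G1P

section MulPow3
variable {G : Type*} [Group G]

lemma mul_pow3 {x y z : G} (h1 : Commute x y) (h2 : Commute x z) (h3 : Commute y z)
    (n : ℕ) : (x * y * z) ^ n = x ^ n * y ^ n * z ^ n := by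
  rw [Commute.mul_pow (Commute.mul_left h2 h3), Commute.mul_pow h1]

lemma sandwich3 (g x y z : G) :
    g⁻¹ * (x * y⁻¹ * (z ^ 2)⁻¹) * g
      = (g⁻¹ * x * g) * (g⁻¹ * y * g)⁻¹ * ((g⁻¹ * z * g) ^ 2)⁻¹ := by
  rw [pow_two, pow_two]
  group

lemma root_eq {x y : G} (h2 : x ^ 2 = y ^ 2) (h3 : x ^ 3 = y ^ 3) : x = y := by
  have : x = x ^ 3 * (x ^ 2)⁻¹ := by group
  rw [this, h2, h3]; group

end MulPow3

namespace G1P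

def u : P := X 1 0
def v : P := X (-1) 0
def k : P := X (-1) (-1)
def s : P := X 0 (-1)
def q : P := X 1 1
def p : P := X 0 1

/-- `a₁`, the word with value `1/30 = 3/2 - 2/3 - 2·(2/5)`. -/
def a1 : P := u * v⁻¹ * (k ^ 2)⁻¹

lemma FA1 : u ^ 2 = ga ^ 3 := by
  have h := Lb 0 0; norm_num at h; rwa [X00] at h

lemma FA2 : v ^ 3 = ga ^ 2 := by
  have h := Lb (-1) 0; norm_num at h; rw [X00] at h; exact h.symm

lemma FA3 : k ^ 5 = ga ^ 2 := by
  have h := Ld (-1) (-1); norm_num at h; rwa [X00] at h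

lemma FA4 : s ^ 5 = ga ^ 3 := by
  have h := Lc 0 (-1); norm_num at h; rw [X00] at h; exact h.symm

lemma FA5 : s ^ 2 = k ^ 3 := by
  have h := Lb (-1) (-1); norm_num at h; exact h

lemma FA6 : q ^ 2 = ga ^ 5 := by
  have h := Ld 0 0; norm_num at h; rw [X00] at h; exact h.symm

lemma FA7 : q ^ 3 = u ^ 5 := by
  have h := Lc 1 0; norm_num at h; exact h

lemma FA8 : p ^ 3 = ga ^ 5 := by
  have h := Lc 0 0; norm_num at h; rwa [X00] at h

lemma FA9 : p ^ 2 = v ^ 5 := by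
  have h := Ld (-1) 0; norm_num at h; exact h.symm

lemma FA10 : (X 2 0) ^ 2 = u ^ 3 := by
  have h := Lb 1 0; norm_num at h; exact h

lemma FA11 : (X (-1) 1) ^ 3 = v ^ 5 := by
  have h := Lc (-1) 0; norm_num at h; exact h

lemma FA12 : (X (-2) (-1)) ^ 5 = v ^ 2 := by
  have h := Ld (-2) (-1); norm_num at h; exact h

lemma FA13 : (X (-2) (-2)) ^ 5 = k ^ 2 := by
  have h := Ld (-2) (-2); norm_num at h; exact h

lemma cuv : Commute u v := by
  have h := C20 (-1) 0; norm_num at h; exact h.symm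

lemma cuk : Commute u k := by
  have h := C21 (-1) (-1); norm_num at h; exact h.symm

lemma cvk : Commute v k := by
  have h := C01 (-1) (-1); norm_num at h; exact h.symm

lemma cau : Commute ga u := by
  have h := C10 0 0; norm_num at h; rwa [X00] at h

lemma cav : Commute ga v := by
  have h := C10 (-1) 0; norm_num at h; rw [X00] at h; exact h.symm

lemma cak : Commute ga k := by
  have h := C11 (-1) (-1); norm_num at h; rw [X00] at h; exact h.symm

lemma cas : Commute ga s := by
  have h := C01 0 (-1); norm_num at h; rw [X00] at h; exact h.symm

lemma csk : Commute s k := by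
  have h := C10 (-1) (-1); norm_num at h; exact h.symm

end G1P

section RootHelpers
variable {G : Type*} [Group G]

lemma root23 {x y : G} (h2 : x ^ 2 = y ^ 2) (h3 : x ^ 3 = y ^ 3) : x = y := by
  have e : x = x ^ 3 * (x ^ 2)⁻¹ := by group
  rw [e, h2, h3]; group

lemma root25 {x y : G} (h2 : x ^ 2 = y ^ 2) (h5 : x ^ 5 = y ^ 5) : x = y := by
  have e : x = x ^ 5 * (x ^ 2)⁻¹ * (x ^ 2)⁻¹ := by group
  rw [e, h2, h5]; group

lemma word_pow {x y z : G} (hxy : Commute x y) (hxz : Commute x z) (hyz : Commute y z)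
    (n : ℕ) : (x * y⁻¹ * (z ^ 2)⁻¹) ^ n = x ^ n * (y ^ n)⁻¹ * (z ^ (2 * n))⁻¹ := by
  rw [mul_pow3 hxy.inv_right (hxz.pow_right 2).inv_right ((hyz.pow_right 2).inv_right).inv_left,
    inv_pow, inv_pow, ← pow_mul]

end RootHelpers

namespace G1P

lemma a1_pow (n : ℕ) : a1 ^ n = u ^ n * (v ^ n)⁻¹ * (k ^ (2 * n))⁻¹ :=
  word_pow cuv cuk cvk n

lemma key30 : u ^ 30 * (v ^ 30)⁻¹ * (k ^ 60)⁻¹ = ga := by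
  rw [show u ^ 30 = ga ^ 45 by
      rw [show (30 : ℕ) = 2 * 15 by norm_num, pow_mul, FA1, ← pow_mul],
    show v ^ 30 = ga ^ 20 by
      rw [show (30 : ℕ) = 3 * 10 by norm_num, pow_mul, FA2, ← pow_mul],
    show k ^ 60 = ga ^ 24 by
      rw [show (60 : ℕ) = 5 * 12 by norm_num, pow_mul, FA3, ← pow_mul]]
  group

lemma Ia : a1 ^ 30 = ga := by
  rw [a1_pow]
  norm_num
  exact key30

end G1P

namespace G1P

-- conjugation of a1 by the generators
lemma conj_a1_b : gb⁻¹ * a1 * gb = X 2 0 * ga⁻¹ * (s ^ 2)⁻¹ := by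
  have h1 : gb⁻¹ * u * gb = X 2 0 := by
    have h := cb 1 0; norm_num at h; exact h
  have h2 : gb⁻¹ * v * gb = ga := by
    have h := cb (-1) 0; norm_num at h; rwa [X00] at h
  have h3 : gb⁻¹ * k * gb = s := by
    have h := cb (-1) (-1); norm_num at h; exact h
  rw [a1, sandwich3, h1, h2, h3]

lemma conj_a1_c : gc⁻¹ * a1 * gc = q * (X (-1) 1)⁻¹ * (v ^ 2)⁻¹ := by
  have h1 : gc⁻¹ * u * gc = q := by
    have h := cc 1 0; norm_num at h; exact h
  have h2 : gc⁻¹ * v * gc = X (-1) 1 := by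
    have h := cc (-1) 0; norm_num at h; exact h
  have h3 : gc⁻¹ * k * gc = v := by
    have h := cc (-1) (-1); norm_num at h; exact h
  rw [a1, sandwich3, h1, h2, h3]

lemma conj_a1_d : gd⁻¹ * a1 * gd = s * (X (-2) (-1))⁻¹ * ((X (-2) (-2)) ^ 2)⁻¹ := by
  have h1 : gd⁻¹ * u * gd = s := by
    have h := cd 1 0; norm_num at h; exact h
  have h2 : gd⁻¹ * v * gd = X (-2) (-1) := by
    have h := cd (-1) 0; norm_num at h; exact h
  have h3 : gd⁻¹ * k * gd = X (-2) (-2) := by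
    have h := cd (-1) (-1); norm_num at h; exact h
  rw [a1, sandwich3, h1, h2, h3]

-- commutation facts for the shifted words
lemma cX20ga : Commute (X 2 0) ga := by
  have h := C20 0 0; norm_num at h; rw [X00] at h; exact h.symm

lemma cX20s : Commute (X 2 0) s := by
  have h := C21 0 (-1); norm_num at h; exact h.symm

lemma cqm11 : Commute q (X (-1) 1) := by
  have h := C20 (-1) 1; norm_num at h; exact h.symm

lemma cqv : Commute q v := by
  have h := C21 (-1) 0; norm_num at h; exact h.symm

lemma cm11v : Commute (X (-1) 1) v := by
  have h := C01 (-1) 0; norm_num at h; exact h.symm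

lemma csm2m1 : Commute s (X (-2) (-1)) := by
  have h := C20 (-2) (-1); norm_num at h; exact h.symm

lemma csm2m2 : Commute s (X (-2) (-2)) := by
  have h := C21 (-2) (-2); norm_num at h; exact h.symm

lemma cm2m1m2m2 : Commute (X (-2) (-1)) (X (-2) (-2)) := by
  have h := C01 (-2) (-2); norm_num at h; exact h.symm

lemma psi_rel_b : gb⁻¹ * a1 ^ 2 * gb = a1 ^ 3 := by
  have hconj : gb⁻¹ * a1 ^ 2 * gb = (gb⁻¹ * a1 * gb) ^ 2 := by
    rw [pow_two, pow_two]; group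
  rw [hconj, conj_a1_b, word_pow cX20ga cX20s cas]
  rw [a1_pow]
  rw [FA10,
    show (ga : P) ^ 2 = ga ^ 2 from rfl,
    show s ^ (2 * 2) = k ^ 6 by
      rw [show (2 * 2 : ℕ) = 2 * 2 from rfl, pow_mul, FA5, ← pow_mul],
    show v ^ 3 = ga ^ 2 from FA2]

lemma psi_rel_c : gc⁻¹ * a1 ^ 3 * gc = a1 ^ 5 := by
  have hconj : gc⁻¹ * a1 ^ 3 * gc = (gc⁻¹ * a1 * gc) ^ 3 := by
    rw [show (3:ℕ) = 2 + 1 from rfl, pow_add, pow_add, pow_two, pow_two, pow_one, pow_one]; group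
  rw [hconj, conj_a1_c, word_pow cqm11 cqv cm11v]
  rw [a1_pow]
  rw [FA7, FA11,
    show v ^ (2 * 3) = ga ^ 4 by
      rw [show (2 * 3 : ℕ) = 3 * 2 by norm_num, pow_mul, FA2, ← pow_mul],
    show k ^ (2 * 5) = ga ^ 4 by
      rw [show (2 * 5 : ℕ) = 5 * 2 by norm_num, pow_mul, FA3, ← pow_mul]]

lemma psi_rel_d : gd⁻¹ * a1 ^ 5 * gd = a1 ^ 2 := by
  have hconj : gd⁻¹ * a1 ^ 5 * gd = (gd⁻¹ * a1 * gd) ^ 5 := by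
    rw [show (5:ℕ) = 2 + 2 + 1 from rfl, pow_add, pow_add, pow_add, pow_add,
      pow_two, pow_two, pow_one, pow_one]
    group
  rw [hconj, conj_a1_d, word_pow csm2m1 csm2m2 cm2m1m2m2]
  rw [a1_pow]
  rw [FA4, FA12,
    show (X (-2) (-2)) ^ (2 * 5) = k ^ 4 by
      rw [show (2 * 5 : ℕ) = 5 * 2 by norm_num, pow_mul, FA13, ← pow_mul],
    show u ^ 2 = ga ^ 3 from FA1]

end G1P

namespace G1P

lemma N1 : a1 ^ 45 = u := by
  rw [a1_pow]
  rw [show u ^ 45 = u * ga ^ 66 by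
      rw [show (45:ℕ) = 1 + 2 * 22 by norm_num, pow_add, pow_one, pow_mul, FA1, ← pow_mul],
    show v ^ 45 = ga ^ 30 by
      rw [show (45:ℕ) = 3 * 15 by norm_num, pow_mul, FA2, ← pow_mul],
    show k ^ (2 * 45) = ga ^ 36 by
      rw [show (2 * 45:ℕ) = 5 * 18 by norm_num, pow_mul, FA3, ← pow_mul]]
  group

lemma N2 : a1 ^ 20 = v := by
  rw [a1_pow]
  rw [show u ^ 20 = ga ^ 30 by
      rw [show (20:ℕ) = 2 * 10 by norm_num, pow_mul, FA1, ← pow_mul],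
    show k ^ (2 * 20) = ga ^ 16 by
      rw [show (2 * 20:ℕ) = 5 * 8 by norm_num, pow_mul, FA3, ← pow_mul]]
  have hsw : Commute ((v ^ 20)⁻¹) ((ga ^ 16)⁻¹) :=
    ((cav.symm.pow_pow 20 16).inv_left).inv_right
  rw [mul_assoc, hsw.eq, ← mul_assoc]
  rw [show v ^ 20 = v ^ 2 * ga ^ 12 by
      rw [show (20:ℕ) = 2 + 3 * 6 by norm_num, pow_add, pow_mul, FA2, ← pow_mul]]
  have h1 : ga ^ 30 * (ga ^ 16)⁻¹ * (v ^ 2 * ga ^ 12)⁻¹ = ga ^ 2 * (v ^ 2)⁻¹ := by group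
  rw [h1, ← FA2]
  group

lemma N3 : a1 ^ 50 = p := by
  rw [a1_pow]
  rw [show u ^ 50 = ga ^ 75 by
      rw [show (50:ℕ) = 2 * 25 by norm_num, pow_mul, FA1, ← pow_mul],
    show k ^ (2 * 50) = ga ^ 40 by
      rw [show (2 * 50:ℕ) = 5 * 20 by norm_num, pow_mul, FA3, ← pow_mul]]
  have hsw : Commute ((v ^ 50)⁻¹) ((ga ^ 40)⁻¹) :=
    ((cav.symm.pow_pow 50 40).inv_left).inv_right
  rw [mul_assoc, hsw.eq, ← mul_assoc]
  rw [show v ^ 50 = v ^ 2 * ga ^ 32 by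
      rw [show (50:ℕ) = 2 + 3 * 16 by norm_num, pow_add, pow_mul, FA2, ← pow_mul]]
  have h1 : ga ^ 75 * (ga ^ 40)⁻¹ * (v ^ 2 * ga ^ 32)⁻¹ = ga ^ 3 * (v ^ 2)⁻¹ := by group
  rw [h1]
  have e1 : ga ^ 3 * (v ^ 2)⁻¹ = ga ^ 3 * v ^ 3 * (v ^ 5)⁻¹ := by group
  rw [e1, FA2, ← FA9, show (ga:P) ^ 3 * ga ^ 2 = ga ^ 5 by group, ← FA8]
  group

lemma N4 : a1 ^ 18 = s := by
  have hsk : s * k = ga := by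
    refine root25 ?_ ?_
    · rw [csk.mul_pow, FA5, show (k:P) ^ 3 * k ^ 2 = k ^ 5 by group, FA3]
    · rw [csk.mul_pow, FA4, FA3]
      group
  rw [a1_pow]
  rw [show u ^ 18 = ga ^ 27 by
      rw [show (18:ℕ) = 2 * 9 by norm_num, pow_mul, FA1, ← pow_mul],
    show v ^ 18 = ga ^ 12 by
      rw [show (18:ℕ) = 3 * 6 by norm_num, pow_mul, FA2, ← pow_mul],
    show k ^ (2 * 18) = k * ga ^ 14 by
      rw [show (2 * 18:ℕ) = 1 + 5 * 7 by norm_num, pow_add, pow_one, pow_mul, FA3, ← pow_mul]]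
  have h1 : ga ^ 27 * (ga ^ 12)⁻¹ * (k * ga ^ 14)⁻¹ = ga * k⁻¹ := by group
  rw [h1, ← hsk]
  group

lemma N5 : a1 ^ 75 = q := by
  have huq : u * ga = q := by
    refine root23 ?_ ?_
    · rw [cau.symm.mul_pow, FA1, FA6]
      group
    · rw [cau.symm.mul_pow, FA7,
        show u ^ 5 = u ^ 3 * ga ^ 3 by rw [show (5:ℕ) = 3 + 2 from rfl, pow_add, FA1]]
  rw [a1_pow]
  rw [show u ^ 75 = u * ga ^ 111 by
      rw [show (75:ℕ) = 1 + 2 * 37 by norm_num, pow_add, pow_one, pow_mul, FA1, ← pow_mul],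
    show v ^ 75 = ga ^ 50 by
      rw [show (75:ℕ) = 3 * 25 by norm_num, pow_mul, FA2, ← pow_mul],
    show k ^ (2 * 75) = ga ^ 60 by
      rw [show (2 * 75:ℕ) = 5 * 30 by norm_num, pow_mul, FA3, ← pow_mul]]
  have h1 : u * ga ^ 111 * (ga ^ 50)⁻¹ * (ga ^ 60)⁻¹ = u * ga := by group
  rw [h1, huq]

lemma N6 : a1 ^ 12 = k := by
  rw [a1_pow]
  rw [show u ^ 12 = ga ^ 18 by
      rw [show (12:ℕ) = 2 * 6 by norm_num, pow_mul, FA1, ← pow_mul],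
    show v ^ 12 = ga ^ 8 by
      rw [show (12:ℕ) = 3 * 4 by norm_num, pow_mul, FA2, ← pow_mul],
    show k ^ (2 * 12) = k ^ 4 * ga ^ 8 by
      rw [show (2 * 12:ℕ) = 4 + 5 * 4 by norm_num, pow_add, pow_mul, FA3, ← pow_mul]]
  have h1 : ga ^ 18 * (ga ^ 8)⁻¹ * (k ^ 4 * ga ^ 8)⁻¹ = ga ^ 2 * (k ^ 4)⁻¹ := by group
  rw [h1, ← FA3]
  group

end G1P


section ConjPow
variable {G : Type*} [Group G]

lemma conj_pownat (g x : G) (n : ℕ) : g⁻¹ * x ^ n * g = (g⁻¹ * x * g) ^ n := by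
  induction n with
  | zero => simp
  | succ n ih => rw [pow_succ, pow_succ, ← ih]; group

lemma conj_zpow' (g x : G) (n : ℤ) : g⁻¹ * x ^ n * g = (g⁻¹ * x * g) ^ n := by
  have h := map_zpow (MulAut.conj g⁻¹).toMonoidHom x n
  simpa [MulAut.conj_apply] using h

end ConjPow

namespace G1P

def f0 : Fin 4 → P := ![a1, gb, gc, gd]

lemma hpsi : ∀ r ∈ G1Rels, FreeGroup.lift f0 r = 1 := by
  intro r hr
  simp only [G1Rels, Set.mem_insert_iff, Set.mem_singleton_iff] at hr
  rcases hr with rfl | rfl | rfl | rfl | rfl | rfl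
  · rw [map_mul, map_mul, map_mul, map_inv, map_inv, map_pow, map_pow,
      FreeGroup.lift_apply_of, FreeGroup.lift_apply_of]
    show gb⁻¹ * a1 ^ 2 * gb * (a1 ^ 3)⁻¹ = 1
    rw [mul_inv_eq_one]
    exact psi_rel_b
  · rw [map_mul, map_mul, map_mul, map_inv, map_inv, map_pow, map_pow,
      FreeGroup.lift_apply_of, FreeGroup.lift_apply_of]
    show gc⁻¹ * a1 ^ 3 * gc * (a1 ^ 5)⁻¹ = 1
    rw [mul_inv_eq_one]
    exact psi_rel_c
  · rw [map_mul, map_mul, map_mul, map_inv, map_inv, map_pow, map_pow,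
      FreeGroup.lift_apply_of, FreeGroup.lift_apply_of]
    show gd⁻¹ * a1 ^ 5 * gd * (a1 ^ 2)⁻¹ = 1
    rw [mul_inv_eq_one]
    exact psi_rel_d
  · rw [map_mul, map_inv, map_mul, map_mul, FreeGroup.lift_apply_of, FreeGroup.lift_apply_of]
    show gb * gc * (gc * gb)⁻¹ = 1
    rw [mul_inv_eq_one]
    exact rel4
  · rw [map_mul, map_inv, map_mul, map_mul, FreeGroup.lift_apply_of, FreeGroup.lift_apply_of]
    show gc * gd * (gd * gc)⁻¹ = 1
    rw [mul_inv_eq_one]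
    exact rel5
  · rw [map_mul, map_inv, map_mul, map_mul, FreeGroup.lift_apply_of, FreeGroup.lift_apply_of]
    show gd * gb * (gb * gd)⁻¹ = 1
    rw [mul_inv_eq_one]
    exact rel6

def psi : P →* P := PresentedGroup.toGroup hpsi

lemma psi_ga : psi ga = a1 := PresentedGroup.toGroup.of hpsi
lemma psi_gb : psi gb = gb := PresentedGroup.toGroup.of hpsi
lemma psi_gc : psi gc = gc := PresentedGroup.toGroup.of hpsi
lemma psi_gd : psi gd = gd := PresentedGroup.toGroup.of hpsi

def f1 : Fin 4 → P := ![ga ^ 30, gb, gc, gd]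

lemma hphi : ∀ r ∈ G1Rels, FreeGroup.lift f1 r = 1 := by
  intro r hr
  simp only [G1Rels, Set.mem_insert_iff, Set.mem_singleton_iff] at hr
  rcases hr with rfl | rfl | rfl | rfl | rfl | rfl
  · rw [map_mul, map_mul, map_mul, map_inv, map_inv, map_pow, map_pow,
      FreeGroup.lift_apply_of, FreeGroup.lift_apply_of]
    show gb⁻¹ * (ga ^ 30) ^ 2 * gb * ((ga ^ 30) ^ 3)⁻¹ = 1
    rw [mul_inv_eq_one,
      show ((ga : P) ^ 30) ^ 2 = (ga ^ 2) ^ 30 by rw [← pow_mul, ← pow_mul, Nat.mul_comm],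
      conj_pownat, rel1, ← pow_mul, ← pow_mul, Nat.mul_comm]
  · rw [map_mul, map_mul, map_mul, map_inv, map_inv, map_pow, map_pow,
      FreeGroup.lift_apply_of, FreeGroup.lift_apply_of]
    show gc⁻¹ * (ga ^ 30) ^ 3 * gc * ((ga ^ 30) ^ 5)⁻¹ = 1
    rw [mul_inv_eq_one,
      show ((ga : P) ^ 30) ^ 3 = (ga ^ 3) ^ 30 by rw [← pow_mul, ← pow_mul, Nat.mul_comm],
      conj_pownat, rel2, ← pow_mul, ← pow_mul, Nat.mul_comm]
  · rw [map_mul, map_mul, map_mul, map_inv, map_inv, map_pow, map_pow,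
      FreeGroup.lift_apply_of, FreeGroup.lift_apply_of]
    show gd⁻¹ * (ga ^ 30) ^ 5 * gd * ((ga ^ 30) ^ 2)⁻¹ = 1
    rw [mul_inv_eq_one,
      show ((ga : P) ^ 30) ^ 5 = (ga ^ 5) ^ 30 by rw [← pow_mul, ← pow_mul, Nat.mul_comm],
      conj_pownat, rel3, ← pow_mul, ← pow_mul, Nat.mul_comm]
  · rw [map_mul, map_inv, map_mul, map_mul, FreeGroup.lift_apply_of, FreeGroup.lift_apply_of]
    show gb * gc * (gc * gb)⁻¹ = 1
    rw [mul_inv_eq_one]; exact rel4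
  · rw [map_mul, map_inv, map_mul, map_mul, FreeGroup.lift_apply_of, FreeGroup.lift_apply_of]
    show gc * gd * (gd * gc)⁻¹ = 1
    rw [mul_inv_eq_one]; exact rel5
  · rw [map_mul, map_inv, map_mul, map_mul, FreeGroup.lift_apply_of, FreeGroup.lift_apply_of]
    show gd * gb * (gb * gd)⁻¹ = 1
    rw [mul_inv_eq_one]; exact rel6

def phi : P →* P := PresentedGroup.toGroup hphi

lemma phi_ga : phi ga = ga ^ 30 := PresentedGroup.toGroup.of hphi
lemma phi_gb : phi gb = gb := PresentedGroup.toGroup.of hphi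
lemma phi_gc : phi gc = gc := PresentedGroup.toGroup.of hphi
lemma phi_gd : phi gd = gd := PresentedGroup.toGroup.of hphi

lemma phi_w (i j : ℤ) : phi (w i j) = w i j := by
  rw [w, map_mul, map_zpow, map_zpow, phi_gb, phi_gc]

lemma phi_X (i j : ℤ) : phi (X i j) = (X i j) ^ 30 := by
  rw [X, map_mul, map_mul, map_inv, phi_w, phi_ga, conj_pownat]

lemma phi_a1 : phi a1 = ga := by
  rw [a1, map_mul, map_mul, map_inv, map_inv, map_pow]
  rw [show (u : P) = X 1 0 from rfl, show (v : P) = X (-1) 0 from rfl,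
    show (k : P) = X (-1) (-1) from rfl, phi_X, phi_X, phi_X]
  rw [← pow_mul]
  exact key30

end G1P

section ConjPow2
variable {G : Type*} [Group G]

lemma conj_zpow'' (g x : G) (n : ℤ) : g * x ^ n * g⁻¹ = (g * x * g⁻¹) ^ n := by
  have h := conj_zpow' g⁻¹ x n
  simpa using h

lemma commute_all_of_gen {S : Set G} (htop : ∀ x : G, x ∈ Subgroup.closure S)
    (hc : ∀ a ∈ S, ∀ b ∈ S, Commute a b) (x y : G) : Commute x y := by
  have h1 : ∀ a ∈ S, Commute a y := by
    intro a ha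
    refine Subgroup.closure_induction (p := fun g _ => Commute a g) ?_ ?_ ?_ ?_ (htop y)
    · exact fun b hb => hc a ha b hb
    · exact Commute.one_right a
    · exact fun b c _ _ hb hc' => hb.mul_right hc'
    · exact fun b _ hb => hb.inv_right
  refine Subgroup.closure_induction (p := fun g _ => Commute g y) ?_ ?_ ?_ ?_ (htop x)
  · exact h1
  · exact Commute.one_left y
  · exact fun a b _ _ ha hb => ha.mul_left hb
  · exact fun a _ ha => ha.inv_left

end ConjPow2

namespace G1P

lemma psiphi : psi.comp phi = MonoidHom.id P := by
  apply PresentedGroup.ext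
  intro x
  fin_cases x
  · show psi (phi ga) = ga
    rw [phi_ga, map_pow, psi_ga, Ia]
  · show psi (phi gb) = gb
    rw [phi_gb, psi_gb]
  · show psi (phi gc) = gc
    rw [phi_gc, psi_gc]
  · show psi (phi gd) = gd
    rw [phi_gd, psi_gd]

lemma phipsi : phi.comp psi = MonoidHom.id P := by
  apply PresentedGroup.ext
  intro x
  fin_cases x
  · show phi (psi ga) = ga
    rw [psi_ga, phi_a1]
  · show phi (psi gb) = gb
    rw [psi_gb, phi_gb]
  · show phi (psi gc) = gc
    rw [psi_gc, phi_gc]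
  · show phi (psi gd) = gd
    rw [psi_gd, phi_gd]

def eAut : P ≃* P := MonoidHom.toMulEquiv phi psi psiphi phipsi

lemma eAut_apply (x : P) : eAut x = phi x := rfl

/-- the tower of `30^n`-th roots of `a` -/
def aseq : ℕ → P
  | 0 => ga
  | n + 1 => psi (aseq n)

lemma aseq_pow30 (n : ℕ) : (aseq (n + 1)) ^ 30 = aseq n := by
  induction n with
  | zero => show (psi ga) ^ 30 = ga; rw [psi_ga, Ia]
  | succ n ih =>
    show (psi (aseq (n + 1))) ^ 30 = aseq (n + 1)
    rw [← map_pow, ih]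
    rfl

lemma aseq_ga (n : ℕ) : ga = (aseq n) ^ (30 ^ n) := by
  induction n with
  | zero => simp [aseq]
  | succ n ih =>
    rw [ih, ← aseq_pow30 n, ← pow_mul, pow_succ, Nat.mul_comm (30 ^ n) 30]

lemma aseq_step (g : P) (hg : psi g = g) (kk : ℕ)
    (h0 : g⁻¹ * ga * g = a1 ^ kk) (n : ℕ) :
    g⁻¹ * aseq n * g = (aseq (n + 1)) ^ kk := by
  induction n with
  | zero =>
    show g⁻¹ * ga * g = (psi ga) ^ kk
    rw [psi_ga]; exact h0
  | succ n ih =>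
    have key : g⁻¹ * aseq (n + 1) * g = psi (g⁻¹ * aseq n * g) := by
      rw [map_mul, map_mul, map_inv, hg]; rfl
    rw [key, ih, map_pow]; rfl

lemma aseq_b (n : ℕ) : gb⁻¹ * aseq n * gb = (aseq (n + 1)) ^ 45 := by
  refine aseq_step gb psi_gb 45 ?_ n
  have h := cb 0 0
  norm_num at h
  rw [X00] at h
  rw [h, N1]
  rfl

lemma aseq_b' (n : ℕ) : gb * aseq n * gb⁻¹ = (aseq (n + 1)) ^ 20 := by
  have h := aseq_step gb⁻¹ (by rw [map_inv, psi_gb]) 20 ?_ n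
  · simpa using h
  · have h2 := cb' 0 0
    norm_num at h2
    rw [X00] at h2
    simpa [h2, v] using N2.symm

lemma aseq_c (n : ℕ) : gc⁻¹ * aseq n * gc = (aseq (n + 1)) ^ 50 := by
  refine aseq_step gc psi_gc 50 ?_ n
  have h := cc 0 0
  norm_num at h
  rw [X00] at h
  rw [h, N3]
  rfl

lemma aseq_c' (n : ℕ) : gc * aseq n * gc⁻¹ = (aseq (n + 1)) ^ 18 := by
  have h := aseq_step gc⁻¹ (by rw [map_inv, psi_gc]) 18 ?_ n
  · simpa using h
  · have h2 := cc' 0 0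
    norm_num at h2
    rw [X00] at h2
    simpa [h2, s] using N4.symm

lemma aseq_d (n : ℕ) : gd⁻¹ * aseq n * gd = (aseq (n + 1)) ^ 12 := by
  refine aseq_step gd psi_gd 12 ?_ n
  have h := cd 0 0
  norm_num at h
  rw [X00] at h
  rw [h, N6]
  rfl

lemma aseq_d' (n : ℕ) : gd * aseq n * gd⁻¹ = (aseq (n + 1)) ^ 75 := by
  have h := aseq_step gd⁻¹ (by rw [map_inv, psi_gd]) 75 ?_ n
  · simpa using h
  · have h2 := cd' 0 0
    norm_num at h2
    rw [X00] at h2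
    simpa [h2, q] using N5.symm

/-- the union of the tower -/
def U : Subgroup P := ⨆ n, Subgroup.zpowers (aseq n)

lemma U_mono : Monotone fun n => Subgroup.zpowers (aseq n) := by
  apply monotone_nat_of_le_succ
  intro n
  rw [Subgroup.zpowers_le]
  exact ⟨((30 : ℕ) : ℤ), by
    show aseq (n + 1) ^ ((30 : ℕ) : ℤ) = aseq n
    rw [zpow_natCast, aseq_pow30]⟩

lemma mem_U_iff (x : P) : x ∈ U ↔ ∃ n, x ∈ Subgroup.zpowers (aseq n) :=
  Subgroup.mem_iSup_of_directed U_mono.directed_le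

lemma ga_mem_U : ga ∈ U :=
  (mem_U_iff _).mpr ⟨0, Subgroup.mem_zpowers _⟩

end G1P

namespace G1P

lemma normalizer_gen (g : P) (k1 k2 : ℕ)
    (h1 : ∀ n, g⁻¹ * aseq n * g = (aseq (n + 1)) ^ k1)
    (h2 : ∀ n, g * aseq n * g⁻¹ = (aseq (n + 1)) ^ k2) : g ∈ Subgroup.normalizer (U : Set P) := by
  rw [Subgroup.mem_normalizer_iff]
  intro h
  constructor
  · intro hh
    obtain ⟨n, hn⟩ := (mem_U_iff h).mp hh
    obtain ⟨m, rfl⟩ := Subgroup.mem_zpowers_iff.mp hn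
    refine (mem_U_iff _).mpr ⟨n + 1, Subgroup.mem_zpowers_iff.mpr ⟨(k2 : ℤ) * m, ?_⟩⟩
    rw [conj_zpow'' g (aseq n) m, h2 n, ← zpow_natCast ((aseq (n+1))) k2, ← zpow_mul]
  · intro hy
    obtain ⟨n, hn⟩ := (mem_U_iff _).mp hy
    obtain ⟨m, hm⟩ := Subgroup.mem_zpowers_iff.mp hn
    have He : h = g⁻¹ * (g * h * g⁻¹) * g := by group
    refine (mem_U_iff _).mpr ⟨n + 1, Subgroup.mem_zpowers_iff.mpr ⟨(k1 : ℤ) * m, ?_⟩⟩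
    rw [He, ← hm, conj_zpow' g (aseq n) m, h1 n, ← zpow_natCast ((aseq (n+1))) k1, ← zpow_mul]

lemma ga_mem_normalizer : ga ∈ Subgroup.normalizer (U : Set P) := by
  rw [Subgroup.mem_normalizer_iff]
  intro h
  have key : ∀ x ∈ U, ga * x * ga⁻¹ = x := by
    intro x hx
    obtain ⟨n, hn⟩ := (mem_U_iff x).mp hx
    obtain ⟨m, rfl⟩ := Subgroup.mem_zpowers_iff.mp hn
    have hc : Commute ga ((aseq n) ^ m) := by
      rw [aseq_ga n]
      exact ((Commute.refl (aseq n)).pow_left (30 ^ n)).zpow_right m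
    rw [hc.eq]; group
  constructor
  · intro hh
    rw [key h hh]; exact hh
  · intro hy
    have key2 : ∀ x ∈ U, ga⁻¹ * x * ga = x := by
      intro x hx
      obtain ⟨n, hn⟩ := (mem_U_iff x).mp hx
      obtain ⟨m, rfl⟩ := Subgroup.mem_zpowers_iff.mp hn
      have hc : Commute ga ((aseq n) ^ m) := by
        rw [aseq_ga n]
        exact ((Commute.refl (aseq n)).pow_left (30 ^ n)).zpow_right m
      rw [(hc.inv_left).eq]; group
    have He : h = ga⁻¹ * (ga * h * ga⁻¹) * ga := by group
    rw [He, key2 _ hy]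
    exact hy

lemma U_normal : U.Normal := by
  rw [← Subgroup.normalizer_eq_top_iff, Subgroup.eq_top_iff']
  intro x
  refine PresentedGroup.generated_by G1Rels (Subgroup.normalizer (U : Set P)) ?_ x
  intro j
  fin_cases j
  · exact ga_mem_normalizer
  · exact normalizer_gen gb 45 20 aseq_b aseq_b'
  · exact normalizer_gen gc 50 18 aseq_c aseq_c'
  · exact normalizer_gen gd 12 75 aseq_d aseq_d'

end G1P

namespace G1P

instance U_normal_inst : U.Normal := U_normal

lemma quot_comm : ∀ x y : P ⧸ U, Commute x y := by
  set π := QuotientGroup.mk' U with hπ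
  have htop : ∀ x : P ⧸ U, x ∈ Subgroup.closure (Set.range fun i : Fin 4 => π (PresentedGroup.of i)) := by
    intro x
    obtain ⟨z, rfl⟩ := QuotientGroup.mk'_surjective U x
    refine PresentedGroup.generated_by G1Rels
      ((Subgroup.closure _).comap π) ?_ z
    intro j
    exact Subgroup.mem_comap.mpr (Subgroup.subset_closure ⟨j, rfl⟩)
  have h0 : π (PresentedGroup.of 0) = 1 := by
    rw [QuotientGroup.mk'_apply]
    exact (QuotientGroup.eq_one_iff _).mpr ga_mem_U
  have hcomm : ∀ i j : Fin 4, Commute (π (PresentedGroup.of i)) (π (PresentedGroup.of j)) := by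
    have hbc' : Commute (π (PresentedGroup.of 1)) (π (PresentedGroup.of 2)) := by
      show π gb * π gc = π gc * π gb
      rw [← map_mul, ← map_mul, rel4]
    have hcd' : Commute (π (PresentedGroup.of 2)) (π (PresentedGroup.of 3)) := by
      show π gc * π gd = π gd * π gc
      rw [← map_mul, ← map_mul, rel5]
    have hdb' : Commute (π (PresentedGroup.of 3)) (π (PresentedGroup.of 1)) := by
      show π gd * π gb = π gb * π gd
      rw [← map_mul, ← map_mul, rel6]
    intro i j
    fin_cases i <;> fin_cases j
    · show Commute (π (PresentedGroup.of 0)) (π (PresentedGroup.of 0))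
      exact Commute.refl _
    · show Commute (π (PresentedGroup.of 0)) (π (PresentedGroup.of 1))
      rw [h0]; exact Commute.one_left _
    · show Commute (π (PresentedGroup.of 0)) (π (PresentedGroup.of 2))
      rw [h0]; exact Commute.one_left _
    · show Commute (π (PresentedGroup.of 0)) (π (PresentedGroup.of 3))
      rw [h0]; exact Commute.one_left _
    · show Commute (π (PresentedGroup.of 1)) (π (PresentedGroup.of 0))
      rw [h0]; exact Commute.one_right _
    · show Commute (π (PresentedGroup.of 1)) (π (PresentedGroup.of 1))
      exact Commute.refl _
    · show Commute (π (PresentedGroup.of 1)) (π (PresentedGroup.of 2))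
      exact hbc'
    · show Commute (π (PresentedGroup.of 1)) (π (PresentedGroup.of 3))
      exact hdb'.symm
    · show Commute (π (PresentedGroup.of 2)) (π (PresentedGroup.of 0))
      rw [h0]; exact Commute.one_right _
    · show Commute (π (PresentedGroup.of 2)) (π (PresentedGroup.of 1))
      exact hbc'.symm
    · show Commute (π (PresentedGroup.of 2)) (π (PresentedGroup.of 2))
      exact Commute.refl _
    · show Commute (π (PresentedGroup.of 2)) (π (PresentedGroup.of 3))
      exact hcd'
    · show Commute (π (PresentedGroup.of 3)) (π (PresentedGroup.of 0))
      rw [h0]; exact Commute.one_right _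
    · show Commute (π (PresentedGroup.of 3)) (π (PresentedGroup.of 1))
      exact hdb'
    · show Commute (π (PresentedGroup.of 3)) (π (PresentedGroup.of 2))
      exact hcd'.symm
    · show Commute (π (PresentedGroup.of 3)) (π (PresentedGroup.of 3))
      exact Commute.refl _
  refine commute_all_of_gen htop ?_
  rintro a ⟨i, rfl⟩ b ⟨j, rfl⟩
  exact hcomm i j

open commutatorElement in
lemma commutator_le_U : commutator P ≤ U := by
  rw [commutator_def, Subgroup.commutator_le]
  intro g _ h _
  have h1 : ((⁅g, h⁆ : P) : P ⧸ U) = 1 := by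
    have : ((⁅g, h⁆ : P) : P ⧸ U) = ⁅(g : P ⧸ U), (h : P ⧸ U)⁆ :=
      map_commutatorElement (QuotientGroup.mk' U) g h
    rw [this]
    exact commutatorElement_eq_one_iff_commute.mpr (quot_comm _ _)
  exact (QuotientGroup.eq_one_iff _).mp h1

lemma metabelian : IsMetabelian P := by
  intro x y
  obtain ⟨n, hn⟩ := (mem_U_iff _).mp (commutator_le_U x.2)
  obtain ⟨m, hm⟩ := (mem_U_iff _).mp (commutator_le_U y.2)
  have hn' : (x : P) ∈ Subgroup.zpowers (aseq (max n m)) := U_mono (le_max_left n m) hn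
  have hm' : (y : P) ∈ Subgroup.zpowers (aseq (max n m)) := U_mono (le_max_right n m) hm
  obtain ⟨i, hi⟩ := Subgroup.mem_zpowers_iff.mp hn'
  obtain ⟨j, hj⟩ := Subgroup.mem_zpowers_iff.mp hm'
  have : Commute (x : P) (y : P) := by
    rw [← hi, ← hj]
    exact (Commute.refl (aseq (max n m))).zpow_zpow i j
  exact Subtype.ext this.eq

end G1P


/-- The group `G₁` above is metabelian, and the assignments `a ↦ a³⁰`,
`b ↦ b`, `c ↦ c`, `d ↦ d` determine an automorphism of `G₁`. -/
theorem G1_metabelian_and_automorphism :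
    IsMetabelian (PresentedGroup G1Rels) ∧
      ∃ e : PresentedGroup G1Rels ≃* PresentedGroup G1Rels,
        e (PresentedGroup.of 0) = (PresentedGroup.of 0 : PresentedGroup G1Rels) ^ (30 : ℕ) ∧
        e (PresentedGroup.of 1) = (PresentedGroup.of 1 : PresentedGroup G1Rels) ∧
        e (PresentedGroup.of 2) = (PresentedGroup.of 2 : PresentedGroup G1Rels) ∧
        e (PresentedGroup.of 3) = (PresentedGroup.of 3 : PresentedGroup G1Rels) := by
  refine ⟨G1P.metabelian, ⟨G1P.eAut, ?_, ?_, ?_, ?_⟩⟩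
  · show G1P.phi (PresentedGroup.of 0) = (PresentedGroup.of 0 : PresentedGroup G1Rels) ^ (30 : ℕ)
    exact G1P.phi_ga
  · show G1P.phi (PresentedGroup.of 1) = (PresentedGroup.of 1 : PresentedGroup G1Rels)
    exact G1P.phi_gb
  · show G1P.phi (PresentedGroup.of 2) = (PresentedGroup.of 2 : PresentedGroup G1Rels)
    exact G1P.phi_gc
  · show G1P.phi (PresentedGroup.of 3) = (PresentedGroup.of 3 : PresentedGroup G1Rels)
    exact G1P.phi_gd
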